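/- Deterministic CMI continuity bound (core inequality in the proof of the Total Error Bound): let A be a finite type with exactly two elements, B and C finite types, and p, q probability mass functions on A × B × C whose total variation distance satisfies δ(p,q) ≤ δ₀ for some δ₀ ∈ [0,1]. Define I_p = H_p(A | C) − H_p(A | B × C) and I_q = H_q(A | C) − H_q(A | B × C). Then |I_p − I_q| ≤ 2·δ₀·log 2 + 2·(1+δ₀)·h_b(δ₀/(1+δ₀)). -/

import Mathlib

open Finset

/-- Shannon entropy (in nats) of a probability mass function on a finite type,
with the convention `0 · log 0 = 0` (which holds since `Real.log 0 = 0`). -/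
noncomputable def entropy {S : Type*} [Fintype S] (p : S → ℝ) : ℝ :=
  ∑ x, -(p x * Real.log (p x))

/-- Conditional Shannon entropy `H_p(A | B)` of a pmf `p` on a product
`A × B`: `∑_b p_B(b) · H(p_{A|B=b})`, where terms with `p_B(b) = 0`
contribute `0` (the factor `p_B(b)` vanishes). -/
noncomputable def condEntropy {A B : Type*} [Fintype A] [Fintype B]
    (p : A × B → ℝ) : ℝ :=
  ∑ b, (∑ a, p (a, b)) * entropy (fun a => p (a, b) / ∑ a', p (a', b))

/-- Conditional mutual information `I_p(A; B | C)` of a pmf `p` on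
`A × B × C`, defined as `H_p(A | C) − H_p(A | B × C)`. -/
noncomputable def cmi {A B C : Type*} [Fintype A] [Fintype B] [Fintype C]
    (p : A × B × C → ℝ) : ℝ :=
  condEntropy (fun ac : A × C => ∑ b, p (ac.1, b, ac.2)) -
    condEntropy (fun abc : A × (B × C) => p (abc.1, abc.2.1, abc.2.2))

/-- Kullback–Leibler divergence (in nats) between two pmfs on a finite type,
with the convention that terms with `p x = 0` contribute `0`. -/
noncomputable def klDiv {S : Type*} [Fintype S] (p q : S → ℝ) : ℝ :=
  ∑ x, p x * Real.log (p x / q x)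

/-- Total variation distance between two pmfs on a finite type. -/
noncomputable def tvDist {S : Type*} [Fintype S] (p q : S → ℝ) : ℝ :=
  (1 / 2) * ∑ x, |p x - q x|

/-- Binary entropy function (in nats), `h_b(x) = −x log x − (1−x) log(1−x)`,
with `h_b(0) = h_b(1) = 0` (automatic since `Real.log 0 = 0`). -/
noncomputable def binEntropy (x : ℝ) : ℝ :=
  -(x * Real.log x) - (1 - x) * Real.log (1 - x)

section AuxAFW
open Real

lemma entropy_def' {S : Type*} [Fintype S] (p : S → ℝ) :
    entropy p = ∑ x, negMulLog (p x) := by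
  simp [entropy, negMulLog, neg_mul]

lemma binEntropy_eq (t : ℝ) : _root_.binEntropy t = negMulLog t + negMulLog (1 - t) := by
  simp [_root_.binEntropy, negMulLog]; ring

lemma entropy_le_log_card {S : Type*} [Fintype S] (u : S → ℝ) (hu : ∀ x, 0 ≤ u x)
    (hsum : ∑ x, u x = 1) : entropy u ≤ Real.log (Fintype.card S) := by
  have hne : (0 : ℝ) < (Fintype.card S : ℝ) := by
    have h : (univ : Finset S).Nonempty := by
      by_contra h
      rw [not_nonempty_iff_eq_empty] at h
      rw [h, Finset.sum_empty] at hsum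
      norm_num at hsum
    have := Fintype.card_pos_iff.mpr ⟨h.choose⟩
    exact_mod_cast this
  set n : ℝ := (Fintype.card S : ℝ) with hn
  have key : ∀ x, -(u x * Real.log (u x)) ≤ u x * Real.log n + (1/n - u x) := by
    intro x
    rcases eq_or_lt_of_le (hu x) with h | h
    · rw [← h]; simp; positivity
    · have h1 : (0:ℝ) < (1/n) / (u x) := by positivity
      have h2 := Real.log_le_sub_one_of_pos h1
      have h3 : Real.log ((1/n)/(u x)) = -Real.log n - Real.log (u x) := by
        rw [Real.log_div (by positivity) (ne_of_gt h), one_div, Real.log_inv]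
      have h4 := mul_le_mul_of_nonneg_left h2 (hu x)
      rw [h3] at h4
      have h5 : u x * ((1/n)/(u x) - 1) = 1/n - u x := by field_simp
      rw [h5] at h4
      nlinarith
  calc entropy u ≤ ∑ x, (u x * Real.log n + (1/n - u x)) :=
        Finset.sum_le_sum fun x _ => key x
    _ = Real.log n := by
        rw [Finset.sum_add_distrib, Finset.sum_sub_distrib, ← Finset.sum_mul, hsum,
          Finset.sum_const, card_univ]
        simp [nsmul_eq_mul, ← hn]
        field_simp
        ring

lemma negMulLog_add_le {x y : ℝ} (hx : 0 ≤ x) (hy : 0 ≤ y) :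
    negMulLog (x + y) ≤ negMulLog x + negMulLog y := by
  have h1 : x * Real.log x ≤ x * Real.log (x + y) := by
    rcases eq_or_lt_of_le hx with h | h
    · rw [← h]; simp
    · exact mul_le_mul_of_nonneg_left (Real.log_le_log h (by linarith)) hx
  have h2 : y * Real.log y ≤ y * Real.log (x + y) := by
    rcases eq_or_lt_of_le hy with h | h
    · rw [← h]; simp
    · exact mul_le_mul_of_nonneg_left (Real.log_le_log h (by linarith)) hy
  simp only [negMulLog, neg_mul]
  nlinarith

lemma logsum_two {a b c d : ℝ} (ha : 0 ≤ a) (hac : a ≤ c) (hb : 0 ≤ b) (hbd : b ≤ d) :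
    (a + b) * Real.log ((a + b) / (c + d)) ≤ a * Real.log (a / c) + b * Real.log (b / d) := by
  rcases eq_or_lt_of_le (ha.trans hac) with hc | hc
  · have ha0 : a = 0 := le_antisymm (hc ▸ hac) ha
    simp [ha0, ← hc]
  rcases eq_or_lt_of_le (hb.trans hbd) with hd | hd
  · have hb0 : b = 0 := le_antisymm (hd ▸ hbd) hb
    simp [hb0, ← hd]
  have hcd : (0:ℝ) < c + d := by linarith
  have w1 : (0:ℝ) ≤ c / (c+d) := by positivity
  have w2 : (0:ℝ) ≤ d / (c+d) := by positivity
  have wsum : c/(c+d) + d/(c+d) = 1 := by field_simp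
  have key := Real.convexOn_mul_log.2 (Set.mem_Ici.mpr (div_nonneg ha hc.le))
    (Set.mem_Ici.mpr (div_nonneg hb hd.le)) w1 w2 wsum
  simp only [smul_eq_mul] at key
  have e1 : c/(c+d) * (a/c) + d/(c+d) * (b/d) = (a+b)/(c+d) := by field_simp
  rw [e1] at key
  have e2 : c/(c+d) * (a/c * Real.log (a/c)) = (a * Real.log (a/c))/(c+d) := by
    field_simp
  have e3 : d/(c+d) * (b/d * Real.log (b/d)) = (b * Real.log (b/d))/(c+d) := by
    field_simp
  rw [e2, e3, div_mul_eq_mul_div, ← add_div] at key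
  exact (div_le_div_iff_of_pos_right hcd).mp key


lemma sum_scaled {S : Type*} [Fintype S] (v : S → ℝ) (hv : ∀ x, 0 ≤ v x) :
    (∑ x, v x) * entropy (fun x => v x / ∑ x', v x') =
      ∑ x, -(v x * Real.log (v x / ∑ x', v x')) := by
  rcases eq_or_lt_of_le (Finset.sum_nonneg fun x _ => hv x : (0:ℝ) ≤ ∑ x', v x') with h | h
  · have h0 : ∀ x, v x = 0 := fun x =>
      (Finset.sum_eq_zero_iff_of_nonneg (fun x _ => hv x)).mp h.symm x (mem_univ x)
    have hv0 : v = fun _ => 0 := funext h0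
    subst hv0
    simp [entropy]
  · rw [entropy, Finset.mul_sum]
    refine Finset.sum_congr rfl fun x _ => ?_
    have h2 : (∑ x', v x') * (v x / (∑ x', v x') * Real.log (v x / ∑ x', v x'))
        = v x * Real.log (v x / ∑ x', v x') := by
      field_simp
    rw [mul_neg, h2]

lemma condEntropy_eq_sum {A Y : Type*} [Fintype A] [Fintype Y] (p : A × Y → ℝ)
    (hp : ∀ x, 0 ≤ p x) :
    condEntropy p = ∑ y, ∑ a, -(p (a,y) * Real.log (p (a,y) / ∑ a', p (a',y))) := by
  unfold condEntropy
  exact Finset.sum_congr rfl fun y _ => sum_scaled (fun a => p (a,y)) (fun a => hp _)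

lemma sum_neg_mul_log_div {S : Type*} [Fintype S] (v : S → ℝ) (hv : ∀ x, 0 ≤ v x) :
    ∑ x, -(v x * Real.log (v x / ∑ x', v x')) =
      (∑ x, -(v x * Real.log (v x))) + (∑ x', v x') * Real.log (∑ x', v x') := by
  rcases eq_or_lt_of_le (Finset.sum_nonneg fun x _ => hv x : (0:ℝ) ≤ ∑ x', v x') with h | h
  · have h0 : ∀ x, v x = 0 := fun x =>
      (Finset.sum_eq_zero_iff_of_nonneg (fun x _ => hv x)).mp h.symm x (mem_univ x)
    have hv0 : v = fun _ => 0 := funext h0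
    subst hv0
    simp
  · have key : ∀ x ∈ (univ : Finset S), -(v x * Real.log (v x / ∑ x', v x')) =
        -(v x * Real.log (v x)) + v x * Real.log (∑ x', v x') := by
      intro x _
      rcases eq_or_lt_of_le (hv x) with h2 | h2
      · rw [← h2]; simp
      · rw [Real.log_div (ne_of_gt h2) (ne_of_gt h)]; ring
    rw [Finset.sum_congr rfl key, Finset.sum_add_distrib, ← Finset.sum_mul]

lemma condEntropy_eq_sub {A Y : Type*} [Fintype A] [Fintype Y] (p : A × Y → ℝ)
    (hp : ∀ x, 0 ≤ p x) :
    condEntropy p = entropy p - entropy (fun y => ∑ a, p (a, y)) := by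
  rw [condEntropy_eq_sum p hp]
  have h1 : entropy p = ∑ y, ∑ a, -(p (a,y) * Real.log (p (a,y))) := by
    rw [entropy, Fintype.sum_prod_type]
    exact Finset.sum_comm
  have h2 : entropy (fun y => ∑ a, p (a,y)) =
      ∑ y, -((∑ a, p (a,y)) * Real.log (∑ a, p (a,y))) := rfl
  rw [h1, h2, ← Finset.sum_sub_distrib]
  refine Finset.sum_congr rfl fun y _ => ?_
  rw [sum_neg_mul_log_div (fun a => p (a,y)) (fun a => hp _)]
  ring

lemma entropy_concave {S : Type*} [Fintype S] (a b : S → ℝ) (ha : ∀ x, 0 ≤ a x)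
    (hb : ∀ x, 0 ≤ b x) {t : ℝ} (ht0 : 0 ≤ t) (ht1 : t ≤ 1) :
    (1 - t) * entropy a + t * entropy b ≤ entropy (fun x => (1 - t) * a x + t * b x) := by
  rw [entropy_def', entropy_def', entropy_def', Finset.mul_sum, Finset.mul_sum,
    ← Finset.sum_add_distrib]
  refine Finset.sum_le_sum fun x _ => ?_
  have key := concaveOn_negMulLog.2 (Set.mem_Ici.mpr (ha x)) (Set.mem_Ici.mpr (hb x))
    (by linarith : (0:ℝ) ≤ 1 - t) ht0 (by ring)
  simpa only [smul_eq_mul] using key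

lemma entropy_mix_le {S : Type*} [Fintype S] (a b : S → ℝ) (ha : ∀ x, 0 ≤ a x)
    (hb : ∀ x, 0 ≤ b x) (hsa : ∑ x, a x = 1) (hsb : ∑ x, b x = 1)
    {t : ℝ} (ht0 : 0 ≤ t) (ht1 : t ≤ 1) :
    entropy (fun x => (1 - t) * a x + t * b x) ≤
      (1 - t) * entropy a + t * entropy b + _root_.binEntropy t := by
  rw [entropy_def']
  calc ∑ x, negMulLog ((1-t) * a x + t * b x)
      ≤ ∑ x, (negMulLog ((1-t) * a x) + negMulLog (t * b x)) :=
        Finset.sum_le_sum fun x _ => negMulLog_add_le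
          (mul_nonneg (by linarith) (ha x)) (mul_nonneg ht0 (hb x))
    _ = ∑ x, ((a x * negMulLog (1-t) + (1-t) * negMulLog (a x))
          + (b x * negMulLog t + t * negMulLog (b x))) := by
        refine Finset.sum_congr rfl fun x _ => ?_
        rw [negMulLog_mul, negMulLog_mul]
    _ = (1 - t) * entropy a + t * entropy b + _root_.binEntropy t := by
        rw [binEntropy_eq, entropy_def', entropy_def']
        simp only [Finset.sum_add_distrib, ← Finset.sum_mul, ← Finset.mul_sum, hsa, hsb]
        ring

lemma condEntropy_concave {A Y : Type*} [Fintype A] [Fintype Y] (p q : A × Y → ℝ)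
    (hp : ∀ x, 0 ≤ p x) (hq : ∀ x, 0 ≤ q x) {t : ℝ} (ht0 : 0 < t) (ht1 : t < 1) :
    (1 - t) * condEntropy p + t * condEntropy q ≤
      condEntropy (fun x => (1 - t) * p x + t * q x) := by
  have hω : ∀ x : A × Y, 0 ≤ (1 - t) * p x + t * q x := fun x =>
    add_nonneg (mul_nonneg (by linarith) (hp x)) (mul_nonneg ht0.le (hq x))
  rw [condEntropy_eq_sum p hp, condEntropy_eq_sum q hq, condEntropy_eq_sum _ hω]
  rw [Finset.mul_sum, Finset.mul_sum, ← Finset.sum_add_distrib]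
  refine Finset.sum_le_sum fun y _ => ?_
  rw [Finset.mul_sum, Finset.mul_sum, ← Finset.sum_add_distrib]
  refine Finset.sum_le_sum fun a _ => ?_
  have hsum : ∑ a', ((1-t) * p (a',y) + t * q (a',y)) =
      (1-t) * ∑ a', p (a',y) + t * ∑ a', q (a',y) := by
    rw [Finset.sum_add_distrib, Finset.mul_sum, Finset.mul_sum]
  have hpa : p (a,y) ≤ ∑ a', p (a',y) :=
    Finset.single_le_sum (fun a' _ => hp (a', y)) (mem_univ a)
  have hqa : q (a,y) ≤ ∑ a', q (a',y) :=
    Finset.single_le_sum (fun a' _ => hq (a', y)) (mem_univ a)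
  have key := logsum_two (a := (1-t) * p (a,y)) (c := (1-t) * ∑ a', p (a',y))
    (b := t * q (a,y)) (d := t * ∑ a', q (a',y))
    (mul_nonneg (by linarith) (hp _))
    (mul_le_mul_of_nonneg_left hpa (by linarith))
    (mul_nonneg ht0.le (hq _))
    (mul_le_mul_of_nonneg_left hqa ht0.le)
  rw [mul_div_mul_left _ _ (by linarith : (1:ℝ) - t ≠ 0),
    mul_div_mul_left _ _ (ne_of_gt ht0)] at key
  rw [hsum]
  nlinarith [key]

lemma condEntropy_nonneg {A Y : Type*} [Fintype A] [Fintype Y] (p : A × Y → ℝ)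
    (hp : ∀ x, 0 ≤ p x) : 0 ≤ condEntropy p := by
  unfold condEntropy
  refine Finset.sum_nonneg fun y _ => ?_
  have hs0 : 0 ≤ ∑ a', p (a', y) := Finset.sum_nonneg fun a _ => hp _
  refine mul_nonneg hs0 (Finset.sum_nonneg fun a _ => ?_)
  have h1 : 0 ≤ p (a,y) / ∑ a', p (a',y) := div_nonneg (hp _) hs0
  have h2 : p (a,y) / ∑ a', p (a',y) ≤ 1 := by
    rcases eq_or_lt_of_le hs0 with h | h
    · rw [← h, div_zero]; norm_num
    · rw [div_le_one h]
      exact Finset.single_le_sum (fun a' _ => hp (a', y)) (mem_univ a)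
  simpa [negMulLog, neg_mul] using negMulLog_nonneg h1 h2

lemma condEntropy_le_log_card {A Y : Type*} [Fintype A] [Fintype Y] (p : A × Y → ℝ)
    (hp : ∀ x, 0 ≤ p x) (hsum : ∑ x, p x = 1) :
    condEntropy p ≤ Real.log (Fintype.card A) := by
  unfold condEntropy
  have hmarg : ∑ y, ∑ a, p (a, y) = 1 := by
    rw [← hsum, Fintype.sum_prod_type]
    exact Finset.sum_comm
  calc ∑ y, (∑ a, p (a,y)) * entropy (fun a => p (a, y) / ∑ a', p (a', y))
      ≤ ∑ y, (∑ a, p (a,y)) * Real.log (Fintype.card A) := by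
        refine Finset.sum_le_sum fun y _ => ?_
        have hs0 : 0 ≤ ∑ a', p (a', y) := Finset.sum_nonneg fun a _ => hp _
        rcases eq_or_lt_of_le hs0 with h | h
        · rw [← h, zero_mul, zero_mul]
        · refine mul_le_mul_of_nonneg_left ?_ hs0
          refine entropy_le_log_card _ (fun a => div_nonneg (hp _) hs0) ?_
          rw [← Finset.sum_div, div_self (ne_of_gt h)]
    _ = Real.log (Fintype.card A) := by
        rw [← Finset.sum_mul, hmarg, one_mul]

lemma afw {A Y : Type*} [Fintype A] [Fintype Y] (p q Dm Dp : A × Y → ℝ)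
    (hp : ∀ x, 0 ≤ p x) (hps : ∑ x, p x = 1)
    (hq : ∀ x, 0 ≤ q x) (hqs : ∑ x, q x = 1)
    (hm : ∀ x, 0 ≤ Dm x)
    (hd : ∀ x, 0 ≤ Dp x) (hds : ∑ x, Dp x = 1)
    {t : ℝ} (ht0 : 0 < t) (ht1 : t < 1)
    (hmix : ∀ x, (1 - t) * p x + t * Dm x = (1 - t) * q x + t * Dp x) :
    condEntropy p - condEntropy q ≤
      (t * Real.log (Fintype.card A) + _root_.binEntropy t) / (1 - t) := by
  have hω0 : ∀ x : A × Y, 0 ≤ (1 - t) * p x + t * Dm x := fun x =>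
    add_nonneg (mul_nonneg (by linarith) (hp x)) (mul_nonneg ht0.le (hm x))
  have h1 := condEntropy_concave p Dm hp hm ht0 ht1
  have h2 : condEntropy (fun x : A × Y => (1 - t) * p x + t * Dm x) ≤
      (1 - t) * condEntropy q + t * condEntropy Dp + _root_.binEntropy t := by
    have hωq : (fun x : A × Y => (1 - t) * p x + t * Dm x)
        = fun x => (1 - t) * q x + t * Dp x := funext hmix
    have e1 : condEntropy (fun x : A × Y => (1 - t) * p x + t * Dm x) =
        entropy (fun x : A × Y => (1 - t) * q x + t * Dp x) -
          entropy (fun y => ∑ a, ((1 - t) * q (a, y) + t * Dp (a, y))) := by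
      rw [condEntropy_eq_sub _ hω0]
      simp only [hmix]
    have e2 := condEntropy_eq_sub q hq
    have e3 := condEntropy_eq_sub Dp hd
    have hup := entropy_mix_le q Dp hq hd hqs hds ht0.le ht1.le
    have hlow : (1 - t) * entropy (fun y => ∑ a, q (a, y)) +
        t * entropy (fun y => ∑ a, Dp (a, y)) ≤
        entropy (fun y => ∑ a, ((1 - t) * q (a, y) + t * Dp (a, y))) := by
      have hmargeq : (fun y : Y => ∑ a, ((1 - t) * q (a, y) + t * Dp (a, y)))
          = fun y => (1 - t) * ∑ a, q (a, y) + t * ∑ a, Dp (a, y) :=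
        funext fun y => by rw [Finset.sum_add_distrib, Finset.mul_sum, Finset.mul_sum]
      rw [hmargeq]
      exact entropy_concave (fun y => ∑ a, q (a, y)) (fun y => ∑ a, Dp (a, y))
        (fun y => Finset.sum_nonneg fun a _ => hq _)
        (fun y => Finset.sum_nonneg fun a _ => hd _) ht0.le ht1.le
    rw [e1]
    rw [e2, e3]
    linarith [hup, hlow]
  have h3 := condEntropy_nonneg Dm hm
  have h4 := condEntropy_le_log_card Dp hd hds
  rw [le_div_iff₀ (by linarith : (0:ℝ) < 1 - t)]
  nlinarith [h1, h2, h3, h4, mul_le_mul_of_nonneg_left h4 ht0.le, mul_nonneg ht0.le h3]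





end AuxAFW

/-- **Deterministic CMI continuity bound.**  Let `A` be binary and `p, q`
pmfs on `A × B × C` with `δ(p,q) ≤ δ₀` for some `δ₀ ∈ [0,1]`.  Then
`|I_p(A;B|C) − I_q(A;B|C)| ≤ 2 δ₀ log 2 + 2 (1+δ₀) h_b(δ₀/(1+δ₀))`. -/
theorem cmi_continuity_bound
    {A B C : Type*} [Fintype A] [Fintype B] [Fintype C]
    (hA : Fintype.card A = 2)
    (p q : A × B × C → ℝ)
    (hp : ∀ x, 0 ≤ p x) (hpsum : ∑ x, p x = 1)
    (hq : ∀ x, 0 ≤ q x) (hqsum : ∑ x, q x = 1)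
    (δ₀ : ℝ) (hδ₀ : 0 ≤ δ₀ ∧ δ₀ ≤ 1) (htv : tvDist p q ≤ δ₀) :
    |cmi p - cmi q| ≤
      2 * δ₀ * Real.log 2 + 2 * (1 + δ₀) * binEntropy (δ₀ / (1 + δ₀)) := by
  obtain ⟨hδ0, hδ1⟩ := hδ₀
  rcases eq_or_lt_of_le hδ0 with h0 | h0
  · -- δ₀ = 0 : p = q
    have habs0 : ∑ x, |p x - q x| = 0 := by
      have h2 : 0 ≤ ∑ x, |p x - q x| := Finset.sum_nonneg fun x _ => abs_nonneg _
      have h3 : (1/2 : ℝ) * ∑ x, |p x - q x| ≤ 0 := by rw [← h0] at htv; exact htv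
      linarith
    have hpq : p = q := by
      funext x
      have h4 := (Finset.sum_eq_zero_iff_of_nonneg
        (fun x _ => abs_nonneg (p x - q x))).mp habs0 x (mem_univ x)
      have := abs_eq_zero.mp h4
      linarith
    rw [hpq, sub_self, abs_zero, ← h0]
    norm_num [_root_.binEntropy]
  · -- δ₀ > 0
    set δ := tvDist p q with hδdef
    have hδnn : 0 ≤ δ := mul_nonneg (by norm_num)
      (Finset.sum_nonneg fun x _ => abs_nonneg _)
    have hδle : δ ≤ δ₀ := htv
    have hsum_pm : ∑ x, (p x - q x) = 0 := by
      rw [Finset.sum_sub_distrib, hpsum, hqsum]; ring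
    have habs : ∑ x, |p x - q x| = 2 * δ := by
      rw [hδdef]; unfold tvDist; ring
    have hmaxpq : ∑ x, max (p x - q x) 0 = δ := by
      have hpt : ∀ x ∈ (univ : Finset (A × B × C)), max (p x - q x) 0
          = ((p x - q x) + |p x - q x|) / 2 := by
        intro x _
        rcases le_total (p x - q x) 0 with h | h
        · rw [max_eq_right h, abs_of_nonpos h]; ring
        · rw [max_eq_left h, abs_of_nonneg h]; ring
      rw [Finset.sum_congr rfl hpt, ← Finset.sum_div, Finset.sum_add_distrib,
        hsum_pm, habs]
      ring
    have hmaxqp : ∑ x, max (q x - p x) 0 = δ := by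
      have hpt : ∀ x ∈ (univ : Finset (A × B × C)), max (q x - p x) 0
          = ((q x - p x) + |p x - q x|) / 2 := by
        intro x _
        rcases le_total (p x - q x) 0 with h | h
        · rw [max_eq_left (by linarith), abs_of_nonpos h]; ring
        · rw [max_eq_right (by linarith), abs_of_nonneg h]; ring
      have hsum_mp : ∑ x, (q x - p x) = 0 := by
        rw [Finset.sum_sub_distrib, hpsum, hqsum]; ring
      rw [Finset.sum_congr rfl hpt, ← Finset.sum_div, Finset.sum_add_distrib,
        hsum_mp, habs]
      ring
    set t := δ₀ / (1 + δ₀) with ht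
    have h1δ : (0:ℝ) < 1 + δ₀ := by linarith
    have ht0 : 0 < t := div_pos h0 h1δ
    have ht1 : t < 1 := by rw [ht, div_lt_one h1δ]; linarith
    have h1t : 1 - t = 1 / (1 + δ₀) := by rw [ht]; field_simp; ring
    set Dp : A × B × C → ℝ := fun x => (max (p x - q x) 0 + (δ₀ - δ) * p x) / δ₀ with hDp
    set Dm : A × B × C → ℝ := fun x => (max (q x - p x) 0 + (δ₀ - δ) * p x) / δ₀ with hDm
    have hDp0 : ∀ x, 0 ≤ Dp x := fun x => div_nonneg
      (add_nonneg (le_max_right _ _) (mul_nonneg (by linarith) (hp x))) h0.le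
    have hDm0 : ∀ x, 0 ≤ Dm x := fun x => div_nonneg
      (add_nonneg (le_max_right _ _) (mul_nonneg (by linarith) (hp x))) h0.le
    have hDps : ∑ x, Dp x = 1 := by
      rw [hDp]
      simp only
      rw [← Finset.sum_div, Finset.sum_add_distrib, hmaxpq, ← Finset.mul_sum, hpsum]
      field_simp
      ring
    have hmix : ∀ x, (1 - t) * p x + t * Dm x = (1 - t) * q x + t * Dp x := by
      intro x
      have hkey : p x + max (q x - p x) 0 = q x + max (p x - q x) 0 := by
        rcases le_total (p x) (q x) with h | h
        · rw [max_eq_left (by linarith), max_eq_right (by linarith)]; ring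
        · rw [max_eq_right (by linarith), max_eq_left (by linarith)]; ring
      have em : t * Dm x = (max (q x - p x) 0 + (δ₀ - δ) * p x) / (1 + δ₀) := by
        rw [ht, hDm]
        field_simp
      have ep : t * Dp x = (max (p x - q x) 0 + (δ₀ - δ) * p x) / (1 + δ₀) := by
        rw [ht, hDp]
        field_simp
      rw [em, ep, h1t]
      rw [div_mul_eq_mul_div, one_mul, div_mul_eq_mul_div, one_mul,
        ← add_div, ← add_div]
      congr 1
      linarith [hkey]
    have hDms : ∑ x, Dm x = 1 := by
      rw [hDm]
      simp only
      rw [← Finset.sum_div, Finset.sum_add_distrib, hmaxqp, ← Finset.mul_sum, hpsum]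
      field_simp
      ring
    have margsum : ∀ r : A × B × C → ℝ,
        ∑ ac : A × C, ∑ b, r (ac.1, b, ac.2) = ∑ x, r x := by
      intro r
      rw [Fintype.sum_prod_type, Fintype.sum_prod_type]
      refine Finset.sum_congr rfl fun a _ => ?_
      rw [Fintype.sum_prod_type]
      exact Finset.sum_comm
    have hc2 : (Fintype.card A : ℝ) = 2 := by rw [hA]; norm_num
    have hK : (t * Real.log (Fintype.card A) + _root_.binEntropy t) / (1 - t)
        = δ₀ * Real.log 2 + (1 + δ₀) * _root_.binEntropy t := by
      rw [hc2, h1t, div_div_eq_mul_div, div_one]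
      have htδ : t * (1 + δ₀) = δ₀ := by rw [ht]; field_simp
      linear_combination Real.log 2 * htδ
    have hF2a := afw (A := A) (Y := B × C) p q Dm Dp hp hpsum hq hqsum hDm0 hDp0 hDps
      ht0 ht1 hmix
    have hF2b := afw (A := A) (Y := B × C) q p Dp Dm hq hqsum hp hpsum hDp0 hDm0 hDms
      ht0 ht1 (fun x => (hmix x).symm)
    have hmixm : ∀ ac : A × C,
        (1-t) * (∑ b, p (ac.1,b,ac.2)) + t * (∑ b, Dm (ac.1,b,ac.2))
        = (1-t) * (∑ b, q (ac.1,b,ac.2)) + t * (∑ b, Dp (ac.1,b,ac.2)) := by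
      intro ac
      rw [Finset.mul_sum, Finset.mul_sum, Finset.mul_sum, Finset.mul_sum,
        ← Finset.sum_add_distrib, ← Finset.sum_add_distrib]
      exact Finset.sum_congr rfl fun b _ => hmix _
    have hF1a := afw (A := A) (Y := C)
      (fun ac : A × C => ∑ b, p (ac.1, b, ac.2))
      (fun ac : A × C => ∑ b, q (ac.1, b, ac.2))
      (fun ac : A × C => ∑ b, Dm (ac.1, b, ac.2))
      (fun ac : A × C => ∑ b, Dp (ac.1, b, ac.2))
      (fun ac => Finset.sum_nonneg fun b _ => hp _)
      (by rw [margsum p]; exact hpsum)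
      (fun ac => Finset.sum_nonneg fun b _ => hq _)
      (by rw [margsum q]; exact hqsum)
      (fun ac => Finset.sum_nonneg fun b _ => hDm0 _)
      (fun ac => Finset.sum_nonneg fun b _ => hDp0 _)
      (by rw [margsum Dp]; exact hDps)
      ht0 ht1 hmixm
    have hF1b := afw (A := A) (Y := C)
      (fun ac : A × C => ∑ b, q (ac.1, b, ac.2))
      (fun ac : A × C => ∑ b, p (ac.1, b, ac.2))
      (fun ac : A × C => ∑ b, Dp (ac.1, b, ac.2))
      (fun ac : A × C => ∑ b, Dm (ac.1, b, ac.2))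
      (fun ac => Finset.sum_nonneg fun b _ => hq _)
      (by rw [margsum q]; exact hqsum)
      (fun ac => Finset.sum_nonneg fun b _ => hp _)
      (by rw [margsum p]; exact hpsum)
      (fun ac => Finset.sum_nonneg fun b _ => hDp0 _)
      (fun ac => Finset.sum_nonneg fun b _ => hDm0 _)
      (by rw [margsum Dm]; exact hDms)
      ht0 ht1 (fun ac => (hmixm ac).symm)
    rw [hK] at hF1a hF1b hF2a hF2b
    have ecmi : ∀ r : A × B × C → ℝ, cmi r =
        condEntropy (fun ac : A × C => ∑ b, r (ac.1, b, ac.2)) - condEntropy r :=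
      fun r => rfl
    rw [ecmi p, ecmi q, abs_le]
    constructor <;> linarith [hF1a, hF1b, hF2a, hF2b]
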